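/- Let M be a reduced Krull monoid with torsion class group, let σ : M → ℝ^× be a scale, and let A be a finite set of strong atoms of M. Then ∑_{x ∈ ⟨A⟩} 1/σ(x) = ∏_{a ∈ A} 1/(1 − 1/σ(a)), where the sum converges. -/

import Mathlib

/-- `a` is an atom of the (cancellative commutative) monoid `M`. -/
def IsAtomM {M : Type*} [CancelCommMonoid M] (a : M) : Prop :=
  ¬ IsUnit a ∧ ∀ b c : M, a = b * c → IsUnit b ∨ IsUnit c

/-- `a` is a strong atom of `M`: an atom all of whose powers `a ^ n` factor uniquely into
atoms of `M` (namely as `n` copies of `a`). -/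
def IsStrongAtomM {M : Type*} [CancelCommMonoid M] (a : M) : Prop :=
  IsAtomM a ∧ ∀ n : ℕ, 0 < n → ∀ s : Multiset M,
    (∀ b ∈ s, IsAtomM b) → s.prod = a ^ n → s = Multiset.replicate n a

/-- `p` is a prime element of `M`. -/
def IsPrimeM {M : Type*} [CancelCommMonoid M] (p : M) : Prop :=
  ¬ IsUnit p ∧ ∀ b c : M, p ∣ b * c → p ∣ b ∨ p ∣ c

/-- `M` is reduced: its only unit is the identity. -/
def IsReducedM (M : Type*) [Monoid M] : Prop := ∀ u : M, IsUnit u → u = 1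

/-- `τ : M → F`, with `F` the free commutative monoid on `ι` (written multiplicatively as
`Multiplicative (ι →₀ ℕ)`), is a divisor theory: (1) `τ b ∣ τ c` implies `b ∣ c`;
(2) every `d ∈ F` is a greatest common divisor of finitely many values of `τ`. -/
def IsDivisorTheory {M ι : Type*} [CancelCommMonoid M]
    (τ : M →* Multiplicative (ι →₀ ℕ)) : Prop :=
  (∀ b c : M, τ b ∣ τ c → b ∣ c) ∧
  (∀ d : Multiplicative (ι →₀ ℕ), ∃ s : Finset M, s.Nonempty ∧
    (∀ b ∈ s, d ∣ τ b) ∧ ∀ e : Multiplicative (ι →₀ ℕ), (∀ b ∈ s, e ∣ τ b) → e ∣ d)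

/-- The class group `F/τ(M)` of the divisor theory `τ` is a torsion group: every `d ∈ F`
has a power whose class is trivial, i.e. `d ^ n · τ b = τ c` for some `n ≥ 1` and `b, c ∈ M`. -/
def HasTorsionClassGroup {M ι : Type*} [CancelCommMonoid M]
    (τ : M →* Multiplicative (ι →₀ ℕ)) : Prop :=
  ∀ d : Multiplicative (ι →₀ ℕ), ∃ n : ℕ, 0 < n ∧ ∃ b c : M, d ^ n * τ b = τ c

/-- The sum `∑_{x ∈ α} f x` of nonnegative terms converges to `l` in the sense of the paper:
`l` is the least upper bound (hence supremum) of the finite partial sums. -/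
def SumConvergesTo {α : Type*} (f : α → ℝ) (l : ℝ) : Prop :=
  IsLUB {y : ℝ | ∃ s : Finset α, y = ∑ x ∈ s, f x} l

/-- The product `∏_{x ∈ α} f x` of terms `≥ 1` converges to `l` in the sense of the paper:
`l` is the least upper bound (hence supremum) of the finite partial products. -/
def ProdConvergesTo {α : Type*} (f : α → ℝ) (l : ℝ) : Prop :=
  IsLUB {y : ℝ | ∃ s : Finset α, y = ∏ x ∈ s, f x} l


lemma geom_pi : ∀ (n : ℕ) (q : Fin n → ℝ), (∀ i, 0 ≤ q i) → (∀ i, q i < 1) →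
    HasSum (fun e : Fin n → ℕ => ∏ i, q i ^ e i) (∏ i, (1 - q i)⁻¹) := by
  intro n
  induction n with
  | zero =>
    intro q _ _
    have h1 : HasSum (fun e : Fin 0 → ℕ => ∏ i, q i ^ e i) (∏ i : Fin 0, q i ^ (default : Fin 0 → ℕ) i) :=
      hasSum_single default (fun b hb => absurd (Subsingleton.elim b default) hb)
    simpa using h1
  | succ n ih =>
    intro q h0 h1
    have hgeo : HasSum (fun k : ℕ => q 0 ^ k) (1 - q 0)⁻¹ :=
      hasSum_geometric_of_lt_one (h0 0) (h1 0)
    have htail : HasSum (fun e : Fin n → ℕ => ∏ i : Fin n, q i.succ ^ e i) (∏ i : Fin n, (1 - q i.succ)⁻¹) :=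
      ih (fun i => q i.succ) (fun i => h0 _) (fun i => h1 _)
    have hsummable : Summable (fun x : ℕ × (Fin n → ℕ) => q 0 ^ x.1 * ∏ i : Fin n, q i.succ ^ x.2 i) :=
      Summable.mul_of_nonneg (f := fun k : ℕ => q 0 ^ k)
        (g := fun e : Fin n → ℕ => ∏ i : Fin n, q i.succ ^ e i) hgeo.summable htail.summable
        (Pi.le_def.mpr fun k => pow_nonneg (h0 0) k)
        (Pi.le_def.mpr fun e => Finset.prod_nonneg fun i _ => pow_nonneg (h0 _) _)
    have hmul : HasSum (fun x : ℕ × (Fin n → ℕ) => q 0 ^ x.1 * ∏ i : Fin n, q i.succ ^ x.2 i)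
        ((1 - q 0)⁻¹ * ∏ i : Fin n, (1 - q i.succ)⁻¹) := HasSum.mul (f := fun k : ℕ => q 0 ^ k)
        (g := fun e : Fin n → ℕ => ∏ i : Fin n, q i.succ ^ e i) hgeo htail hsummable
    have heq : HasSum (fun e : Fin (n+1) → ℕ => ∏ i, q i ^ e i)
        ((1 - q 0)⁻¹ * ∏ i : Fin n, (1 - q i.succ)⁻¹) := by
      have := (Equiv.hasSum_iff (f := fun x : ℕ × (Fin n → ℕ) => q 0 ^ x.1 * ∏ i : Fin n, q i.succ ^ x.2 i)
        (a := (1 - q 0)⁻¹ * ∏ i : Fin n, (1 - q i.succ)⁻¹)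
        ((Fin.consEquiv (fun _ : Fin (n+1) => ℕ)).symm)).2 hmul
      have hfe : ((fun x : ℕ × (Fin n → ℕ) => q 0 ^ x.1 * ∏ i : Fin n, q i.succ ^ x.2 i) ∘
          (Fin.consEquiv (fun _ : Fin (n+1) => ℕ)).symm) =
          fun e : Fin (n+1) → ℕ => ∏ i, q i ^ e i := by
        funext e
        simp [Fin.consEquiv, Fin.prod_univ_succ, Fin.tail]
      rwa [hfe] at this
    rw [Fin.prod_univ_succ]
    exact heq

section AuxAlg

variable {M ι : Type*} [CancelCommMonoid M] {τ : M →* Multiplicative (ι →₀ ℕ)}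

lemma euler_tau_inj (hdt : IsDivisorTheory τ) (hred : IsReducedM M) :
    Function.Injective τ := by
  intro b c h
  obtain ⟨u, hu⟩ := hdt.1 b c (h ▸ dvd_refl _)
  obtain ⟨v, hv⟩ := hdt.1 c b (h ▸ dvd_refl _)
  have hbb : b * (u * v) = b * 1 := by
    rw [mul_one, ← mul_assoc, ← hu, ← hv]
  have huv : u * v = 1 := mul_left_cancel hbb
  rw [hu, hred u (IsUnit.of_mul_eq_one v huv), mul_one]

lemma euler_ne_one_of_nonunit (hred : IsReducedM M) {x : M} (hx : ¬ IsUnit x) : x ≠ 1 :=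
  fun h => hx (h ▸ isUnit_one)

lemma euler_eq_one_of_tau (hdt : IsDivisorTheory τ) (hred : IsReducedM M) {x : M}
    (h : τ x = 1) : x = 1 :=
  euler_tau_inj hdt hred (by rw [h, map_one])

/-- size of an element -/
noncomputable def eulerS (τ : M →* Multiplicative (ι →₀ ℕ)) (x : M) : ℕ :=
  (Multiplicative.toAdd (τ x)).sum fun _ n => n

lemma eulerS_mul (x y : M) : eulerS τ (x * y) = eulerS τ x + eulerS τ y := by
  unfold eulerS
  rw [map_mul, toAdd_mul]
  exact Finsupp.sum_add_index' (fun _ => rfl) (fun _ _ _ => rfl)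

lemma euler_eq_one_of_S (hdt : IsDivisorTheory τ) (hred : IsReducedM M) {x : M}
    (h : eulerS τ x = 0) : x = 1 := by
  apply euler_eq_one_of_tau hdt hred
  have hd : Multiplicative.toAdd (τ x) = 0 := by
    ext a
    by_cases ha : a ∈ (Multiplicative.toAdd (τ x)).support
    · exact Finset.sum_eq_zero_iff.mp h a ha
    · exact Finsupp.notMem_support_iff.mp ha
  exact Multiplicative.toAdd.injective (by rw [hd, toAdd_one])

lemma euler_S_pos (hdt : IsDivisorTheory τ) (hred : IsReducedM M) {x : M}
    (hx : ¬ IsUnit x) : 0 < eulerS τ x :=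
  Nat.pos_of_ne_zero fun h => euler_ne_one_of_nonunit hred hx (euler_eq_one_of_S hdt hred h)

lemma euler_exists_atoms (hdt : IsDivisorTheory τ) (hred : IsReducedM M) :
    ∀ (n : ℕ) (x : M), eulerS τ x = n → ¬ IsUnit x →
    ∃ s : Multiset M, s ≠ 0 ∧ (∀ b ∈ s, IsAtomM b) ∧ s.prod = x := by
  intro n
  induction n using Nat.strong_induction_on with
  | _ n ih =>
    intro x hxn hx
    by_cases hat : IsAtomM x
    · exact ⟨{x}, by simp, by simpa using hat, Multiset.prod_singleton x⟩
    · have hsplit : ∃ b c : M, x = b * c ∧ ¬ IsUnit b ∧ ¬ IsUnit c := by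
        unfold IsAtomM at hat
        push_neg at hat
        obtain ⟨b, c, h1, h2⟩ := hat hx
        exact ⟨b, c, h1, h2.1, h2.2⟩
      obtain ⟨b, c, hbc, hb, hc⟩ := hsplit
      have hS : eulerS τ b + eulerS τ c = n := by rw [← eulerS_mul, ← hbc, hxn]
      have hbpos := euler_S_pos hdt hred hb
      have hcpos := euler_S_pos hdt hred hc
      obtain ⟨sb, hsb0, hsba, hsbp⟩ := ih (eulerS τ b) (by omega) b rfl hb
      obtain ⟨sc, hsc0, hsca, hscp⟩ := ih (eulerS τ c) (by omega) c rfl hc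
      refine ⟨sb + sc, by simp [Multiset.eq_zero_iff_forall_notMem] at hsb0 ⊢; tauto,
        fun y hy => ?_, by rw [Multiset.prod_add, hsbp, hscp, hbc]⟩
      rcases Multiset.mem_add.mp hy with h | h
      · exact hsba y h
      · exact hsca y h

end AuxAlg

section AuxAlg2

variable {M ι : Type*} [CancelCommMonoid M] {τ : M →* Multiplicative (ι →₀ ℕ)}

open Finsupp

lemma euler_exists_single (hdt : IsDivisorTheory τ) (htor : HasTorsionClassGroup τ) (p : ι) :
    ∃ n : ℕ, 0 < n ∧ ∃ e : M, Multiplicative.toAdd (τ e) = Finsupp.single p n := by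
  obtain ⟨n, hn, b, c, h⟩ := htor (Multiplicative.ofAdd (Finsupp.single p 1))
  have hdvd : τ b ∣ τ c := ⟨(Multiplicative.ofAdd (Finsupp.single p 1)) ^ n, by
    rw [← h, mul_comm]⟩
  obtain ⟨e, he⟩ := hdt.1 b c hdvd
  refine ⟨n, hn, e, ?_⟩
  have h2 : Multiplicative.toAdd (τ c) = Finsupp.single p n + Multiplicative.toAdd (τ b) := by
    rw [← h, toAdd_mul, toAdd_pow, toAdd_ofAdd, smul_single, smul_eq_mul, mul_one]
  have h3 : Multiplicative.toAdd (τ c) = Multiplicative.toAdd (τ b) + Multiplicative.toAdd (τ e) := by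
    rw [he, map_mul, toAdd_mul]
  rw [h2, add_comm] at h3
  exact (add_left_cancel h3).symm

lemma euler_strong_atom_single (hdt : IsDivisorTheory τ) (htor : HasTorsionClassGroup τ)
    (hred : IsReducedM M) {a : M} (ha : IsStrongAtomM a) :
    ∃ (p : ι) (m : ℕ), 0 < m ∧ Multiplicative.toAdd (τ a) = Finsupp.single p m := by
  classical
  set d : ι →₀ ℕ := Multiplicative.toAdd (τ a) with hd
  have hane : a ≠ 1 := euler_ne_one_of_nonunit hred ha.1.1
  have hdne : d ≠ 0 := by
    intro h0
    exact hane (euler_eq_one_of_tau hdt hred (Multiplicative.toAdd.injective (by rw [← hd, h0, toAdd_one])))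
  -- choose for each prime an element with single divisor
  choose nn hnn ee hee using fun p : ι => euler_exists_single hdt htor p
  set s : Finset ι := d.support with hs
  have hsne : s.Nonempty := Finsupp.support_nonempty_iff.mpr hdne
  set L : ℕ := ∏ p ∈ s, nn p with hL
  have hLpos : 0 < L := Finset.prod_pos fun p _ => hnn p
  set cc : ι → ℕ := fun p => (L / nn p) * d p with hcc
  have hccn : ∀ p ∈ s, cc p * nn p = L * d p := by
    intro p hp
    have hdvd : nn p ∣ L := Finset.dvd_prod_of_mem nn hp
    rw [hcc]
    calc L / nn p * d p * nn p = L / nn p * nn p * d p := by ring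
    _ = L * d p := by rw [Nat.div_mul_cancel hdvd]
  have hccpos : ∀ p ∈ s, 0 < cc p := by
    intro p hp
    have hdvd : nn p ∣ L := Finset.dvd_prod_of_mem nn hp
    have h1 : 0 < L / nn p := Nat.div_pos (Nat.le_of_dvd hLpos hdvd) (hnn p)
    have h2 : 0 < d p := Nat.pos_of_ne_zero (Finsupp.mem_support_iff.mp hp)
    exact Nat.mul_pos h1 h2
  -- key identity
  set E : M := ∏ p ∈ s, (ee p) ^ (cc p) with hE
  have hTE : Multiplicative.toAdd (τ E) = L • d := by
    rw [hE, map_prod, toAdd_prod]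
    have : ∀ p ∈ s, Multiplicative.toAdd (τ (ee p ^ cc p)) = Finsupp.single p (L * d p) := by
      intro p hp
      rw [map_pow, toAdd_pow, hee p, smul_single, smul_eq_mul, hccn p hp]
    rw [Finset.sum_congr rfl this]
    conv_rhs => rw [← Finsupp.sum_single d]
    rw [Finsupp.sum, Finset.smul_sum]
    exact Finset.sum_congr rfl fun p hp => by rw [smul_single, smul_eq_mul]
  have haE : a ^ L = E := by
    apply euler_tau_inj hdt hred
    apply Multiplicative.toAdd.injective
    rw [hTE, map_pow, toAdd_pow]
  -- factor each ee p into atoms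
  have heene : ∀ p ∈ s, ¬ IsUnit (ee p) := by
    intro p hp hu
    have h1 := hred _ hu
    have h2 := hee p
    rw [h1, map_one, toAdd_one] at h2
    exact (hnn p).ne' (Finsupp.single_eq_zero.mp h2.symm)
  choose! ms hms0 hmsa hmsp using fun p (hp : p ∈ s) =>
    euler_exists_atoms hdt hred (eulerS τ (ee p)) (ee p) rfl (heene p hp)
  set W : Multiset M := ∑ p ∈ s, cc p • ms p with hW
  have hWatoms : ∀ b ∈ W, IsAtomM b := by
    intro b hb
    rw [hW] at hb
    obtain ⟨p, hp, hbp⟩ := Multiset.mem_sum.mp hb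
    exact hmsa p hp b (Multiset.mem_of_mem_nsmul hbp)
  have hWprod : W.prod = a ^ L := by
    rw [hW, haE, hE, Multiset.prod_sum]
    exact Finset.prod_congr rfl fun p hp => by rw [Multiset.prod_nsmul, hmsp p hp]
  have hWrepl := ha.2 L hLpos W hWatoms hWprod
  -- conclude each ee p is a power of a
  obtain ⟨p0, hp0⟩ := hsne
  refine ⟨p0, d p0, Nat.pos_of_ne_zero (Finsupp.mem_support_iff.mp hp0), ?_⟩
  -- show support ⊆ {p0}
  have hsub : d.support ⊆ {p0} := by
    -- from: every atom in ms p0 equals a, so ee p0 = a ^ k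
    have hmem : ∀ b ∈ ms p0, b = a := by
      intro b hb
      have hbW : b ∈ W := by
        rw [hW]
        exact Multiset.mem_sum.mpr ⟨p0, hp0, Multiset.mem_nsmul.mpr
          ⟨(hccpos p0 hp0).ne', hb⟩⟩
      rw [hWrepl] at hbW
      exact Multiset.eq_of_mem_replicate hbW
    have hcard : 0 < Multiset.card (ms p0) := Multiset.card_pos.mpr (hms0 p0 hp0)
    have hpow : ee p0 = a ^ Multiset.card (ms p0) := by
      rw [← hmsp p0 hp0]
      conv_lhs => rw [Multiset.eq_replicate_card.mpr hmem]
      rw [Multiset.prod_replicate]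
    have hsingle : Finsupp.single p0 (nn p0) = Multiset.card (ms p0) • d := by
      rw [← hee p0, hpow, map_pow, toAdd_pow]
    intro q hq
    simp only [Finset.mem_singleton]
    by_contra hqp
    have h1 : (Finsupp.single p0 (nn p0)) q = 0 := Finsupp.single_eq_of_ne' (fun h => hqp (h.symm))
    have h2 : (Multiset.card (ms p0) • d) q = Multiset.card (ms p0) * d q := by
      simp [Finsupp.smul_apply]
    have h3 : 0 < d q := Nat.pos_of_ne_zero (Finsupp.mem_support_iff.mp hq)
    rw [hsingle, h2] at h1
    have := Nat.mul_pos hcard h3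
    omega
  have : d = Finsupp.single p0 (d p0) := Finsupp.support_subset_singleton.mp hsub
  exact this

end AuxAlg2

section AuxAlg3

variable {M ι : Type*} [CancelCommMonoid M] {τ : M →* Multiplicative (ι →₀ ℕ)}

lemma euler_prime_unique (hdt : IsDivisorTheory τ) (hred : IsReducedM M) {a b : M}
    (ha : IsStrongAtomM a) (hb : IsStrongAtomM b) {p : ι} {m k : ℕ}
    (hm : 0 < m) (hk : 0 < k)
    (hta : Multiplicative.toAdd (τ a) = Finsupp.single p m)
    (htb : Multiplicative.toAdd (τ b) = Finsupp.single p k) : a = b := by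
  have hab : a ^ k = b ^ m := by
    apply euler_tau_inj hdt hred
    apply Multiplicative.toAdd.injective
    rw [map_pow τ a k, map_pow τ b m, toAdd_pow, toAdd_pow, hta, htb, Finsupp.smul_single,
      Finsupp.smul_single, smul_eq_mul, smul_eq_mul, mul_comm]
  have hrepl := hb.2 m hm (Multiset.replicate k a)
    (fun c hc => (Multiset.eq_of_mem_replicate hc) ▸ ha.1)
    (by rw [Multiset.prod_replicate, hab])
  have hmem : a ∈ Multiset.replicate k a := Multiset.mem_replicate.mpr ⟨hk.ne', rfl⟩
  rw [hrepl] at hmem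
  exact Multiset.eq_of_mem_replicate hmem

end AuxAlg3

/-- Euler's product formula over a finite set of strong atoms: for a scale `σ` on a reduced
Krull monoid with torsion class group and a finite set `A` of strong atoms,
`∑_{x ∈ ⟨A⟩} 1/σ(x)` converges to `∏_{a ∈ A} 1/(1 - 1/σ(a))`. -/
theorem euler_product_finite_set_of_strong_atoms
    {M ι : Type*} [CancelCommMonoid M] (τ : M →* Multiplicative (ι →₀ ℕ))
    (hdt : IsDivisorTheory τ) (htor : HasTorsionClassGroup τ) (hred : IsReducedM M)
    (σ : M →* ℝˣ) (hσ : ∀ a : M, IsStrongAtomM a → 1 < ((σ a : ℝˣ) : ℝ))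
    (A : Finset M) (hA : ∀ a ∈ A, IsStrongAtomM a) :
    SumConvergesTo
      (fun x : ↥(Submonoid.closure (A : Set M)) => 1 / ((σ ↑x : ℝˣ) : ℝ))
      (∏ a ∈ A, 1 / (1 - 1 / ((σ a : ℝˣ) : ℝ))) := by
  classical
  set f : ↥(Submonoid.closure (A : Set M)) → ℝ := fun x => 1 / ((σ ↑x : ℝˣ) : ℝ) with hf
  -- primes and exponents for elements of A
  choose pp mm hmm hsingle using fun a : ↥A => euler_strong_atom_single hdt htor hred (hA a.1 a.2)
  have ppinj : Function.Injective pp := by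
    intro a b h
    exact Subtype.ext (euler_prime_unique hdt hred (hA a.1 a.2) (hA b.1 b.2)
      (hmm a) (hmm b) (hsingle a) (h ▸ hsingle b))
  -- the parametrization
  set Φ : (↥A → ℕ) → M := fun e => ∏ a : ↥A, (a : M) ^ e a with hΦ
  have hΦmem : ∀ e, Φ e ∈ Submonoid.closure (A : Set M) := by
    intro e
    exact Submonoid.prod_mem _ fun a _ =>
      Submonoid.pow_mem _ (Submonoid.subset_closure a.2) _
  have hτΦ : ∀ e : ↥A → ℕ, Multiplicative.toAdd (τ (Φ e)) =
      ∑ a : ↥A, Finsupp.single (pp a) (e a * mm a) := by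
    intro e
    rw [hΦ, map_prod, toAdd_prod]
    refine Finset.sum_congr rfl fun a _ => ?_
    rw [map_pow, toAdd_pow, hsingle a, Finsupp.smul_single, smul_eq_mul]
  have keyapp : ∀ (g : ↥A → ℕ) (a0 : ↥A),
      (∑ a : ↥A, Finsupp.single (pp a) (g a * mm a)) (pp a0) = g a0 * mm a0 := by
    intro g a0
    rw [Finsupp.finset_sum_apply]
    rw [Finset.sum_eq_single a0]
    · rw [Finsupp.single_eq_same]
    · intro a _ hne
      exact Finsupp.single_eq_of_ne' fun h => hne (ppinj h)
    · intro h
      exact absurd (Finset.mem_univ a0) h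
  have hΦinj : Function.Injective Φ := by
    intro e g h
    funext a0
    have h2 := congrArg (fun z => (Multiplicative.toAdd (τ z)) (pp a0)) h
    simp only [hτΦ, keyapp] at h2
    exact Nat.eq_of_mul_eq_mul_right (hmm a0) h2
  have hΦsurj : ∀ x : M, x ∈ Submonoid.closure (A : Set M) → ∃ e : ↥A → ℕ, Φ e = x := by
    intro x hx
    induction hx using Submonoid.closure_induction with
    | mem y hy =>
      refine ⟨fun a => if a = ⟨y, hy⟩ then 1 else 0, ?_⟩
      show (∏ a : ↥A, (a : M) ^ (if a = (⟨y, hy⟩ : ↥A) then 1 else 0)) = y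
      rw [Finset.prod_eq_single_of_mem (⟨y, hy⟩ : ↥A) (Finset.mem_univ _)
        (fun b _ hb => by simp [if_neg hb])]
      simp
    | one => exact ⟨0, by simp [hΦ]⟩
    | mul x y _ _ ihx ihy =>
      obtain ⟨e, he⟩ := ihx
      obtain ⟨g, hg⟩ := ihy
      refine ⟨e + g, ?_⟩
      rw [hΦ, ← he, ← hg, hΦ, ← Finset.prod_mul_distrib]
      exact Finset.prod_congr rfl fun a _ => by rw [Pi.add_apply, pow_add]
  set Φ' : (↥A → ℕ) → ↥(Submonoid.closure (A : Set M)) := fun e => ⟨Φ e, hΦmem e⟩ with hΦ'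
  have hΦ'bij : Function.Bijective Φ' := by
    constructor
    · intro e g h
      exact hΦinj (congrArg Subtype.val h)
    · rintro ⟨x, hx⟩
      obtain ⟨e, he⟩ := hΦsurj x hx
      exact ⟨e, Subtype.ext he⟩
  set E : (↥A → ℕ) ≃ ↥(Submonoid.closure (A : Set M)) := Equiv.ofBijective Φ' hΦ'bij with hEdef
  -- the weights
  set q : ↥A → ℝ := fun a => 1 / ((σ a : ℝˣ) : ℝ) with hq
  have hq1 : ∀ a : ↥A, 1 < ((σ a : ℝˣ) : ℝ) := fun a => hσ a (hA a.1 a.2)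
  have hq0 : ∀ a : ↥A, 0 ≤ q a := fun a => by
    simp only [hq]
    exact div_nonneg zero_le_one (by linarith [hq1 a])
  have hqlt : ∀ a : ↥A, q a < 1 := fun a => by
    simp only [hq]
    rw [div_lt_one (by linarith [hq1 a])]
    exact hq1 a
  -- f ∘ E = product of weights
  have hfE : (f ∘ E) = fun e : ↥A → ℕ => ∏ a : ↥A, q a ^ e a := by
    funext e
    have h1 : ((σ (Φ e) : ℝˣ) : ℝ) = ∏ a : ↥A, ((σ a : ℝˣ) : ℝ) ^ e a := by
      have hcomp : ∀ x : M, ((σ x : ℝˣ) : ℝ) = ((Units.coeHom ℝ).comp σ) x := fun _ => rfl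
      rw [hcomp, hΦ, map_prod]
      exact Finset.prod_congr rfl fun a _ => by rw [map_pow]; rfl
    show 1 / ((σ (Φ e) : ℝˣ) : ℝ) = _
    rw [h1, hq]
    rw [one_div, ← Finset.prod_inv_distrib]
    exact Finset.prod_congr rfl fun a _ => by simp [one_div, inv_pow]
  -- the analytic statement over (↥A → ℕ)
  have hF : HasSum (fun e : ↥A → ℕ => ∏ a : ↥A, q a ^ e a) (∏ a : ↥A, (1 - q a)⁻¹) := by
    set k : ℕ := Fintype.card ↥A with hk
    set ε : ↥A ≃ Fin k := Fintype.equivFin ↥A with hε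
    have hgeo := geom_pi k (q ∘ ε.symm) (fun i => hq0 _) (fun i => hqlt _)
    have htrans := (Equiv.hasSum_iff (f := fun g : Fin k → ℕ => ∏ i : Fin k, (q ∘ ε.symm) i ^ g i)
      (a := ∏ i : Fin k, (1 - (q ∘ ε.symm) i)⁻¹) (Equiv.arrowCongr ε (Equiv.refl ℕ))).2 hgeo
    have heq1 : ((fun g : Fin k → ℕ => ∏ i : Fin k, (q ∘ ε.symm) i ^ g i) ∘
        (Equiv.arrowCongr ε (Equiv.refl ℕ))) = fun e : ↥A → ℕ => ∏ a : ↥A, q a ^ e a := by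
      funext e
      show (∏ i : Fin k, q (ε.symm i) ^ e (ε.symm i)) = _
      exact Equiv.prod_comp ε.symm (fun a => q a ^ e a)
    have heq2 : (∏ i : Fin k, (1 - (q ∘ ε.symm) i)⁻¹) = ∏ a : ↥A, (1 - q a)⁻¹ :=
      Equiv.prod_comp ε.symm (fun a => (1 - q a)⁻¹)
    rwa [heq1, heq2] at htrans
  have hfsum : HasSum f (∏ a : ↥A, (1 - q a)⁻¹) := by
    rw [← hfE] at hF
    exact (Equiv.hasSum_iff E).1 hF
  have hrhs : (∏ a : ↥A, (1 - q a)⁻¹) = ∏ a ∈ A, 1 / (1 - 1 / ((σ a : ℝˣ) : ℝ)) := by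
    rw [← Finset.prod_coe_sort A (fun a => 1 / (1 - 1 / ((σ a : ℝˣ) : ℝ)))]
    exact Finset.prod_congr rfl fun a _ => by rw [hq, one_div]
  have hnonneg : ∀ x, 0 ≤ f x := by
    intro x
    obtain ⟨e, rfl⟩ := E.surjective x
    have : f (E e) = ∏ a : ↥A, q a ^ e a := congrFun hfE e
    rw [this]
    exact Finset.prod_nonneg fun a _ => pow_nonneg (hq0 a) _
  have hset : {y : ℝ | ∃ s : Finset ↥(Submonoid.closure (A : Set M)), y = ∑ x ∈ s, f x} =
      Set.range fun s => ∑ x ∈ s, f x := by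
    ext y
    simp [eq_comm, Set.mem_range]
  rw [SumConvergesTo, hset, ← hrhs]
  exact isLUB_hasSum hnonneg hfsum
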